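/- Let p ∈ (0,1), let n be a positive integer, and let (ξ_i)_{i≥1} be i.i.d. random variables with the Binomial(n,p) distribution. Set S_0 = 1 and S_t = 1 + Σ_{i=1}^{t}(ξ_i − 1), fix an integer H > 0, and let γ = min{t ≥ 1 : S_t ≥ H or S_t = 0}. Let Ξ be a set of positive integers such that the event {S_γ ≥ H and γ ∈ Ξ} has positive probability, and let f : ℝ → ℝ be a monotone increasing function. Then E[f(S_γ − H) | S_γ ≥ H, γ ∈ Ξ] ≤ E[f(X)], where X is a Binomial(n,p) random variable. -/

import Mathlib

open MeasureTheory ProbabilityTheory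
open scoped ENNReal

/-- The Binomial(n,p) distribution, as a measure on `ℕ`. -/
noncomputable def binomialMeasure (n : ℕ) (p : ℝ) : Measure ℕ :=
  Measure.sum fun k : ℕ =>
    (ENNReal.ofReal ((n.choose k : ℝ) * p ^ k * (1 - p) ^ (n - k))) • Measure.dirac k

/-- The random walk `S_t = 1 + ∑_{i=1}^t (ξ_i - 1)`. -/
def walk {Ω : Type*} (ξ : ℕ → Ω → ℕ) (t : ℕ) (ω : Ω) : ℤ :=
  1 + ∑ i ∈ Finset.Icc 1 t, ((ξ i ω : ℤ) - 1)

/-- The stopping time `γ = min {t ≥ 1 : S_t ≥ H or S_t = 0}`. -/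
noncomputable def hitTime {Ω : Type*} (ξ : ℕ → Ω → ℕ) (H : ℕ) (ω : Ω) : ℕ :=
  sInf {t | 1 ≤ t ∧ ((H : ℤ) ≤ walk ξ t ω ∨ walk ξ t ω = 0)}

namespace NPaux

/-- binomial pmf value -/
noncomputable def b (n k : ℕ) (p : ℝ) : ℝ := (n.choose k : ℝ) * p ^ k * (1 - p) ^ (n - k)

/-- expectation of `g` under Binomial(n,p) -/
noncomputable def binE (n : ℕ) (p : ℝ) (g : ℕ → ℝ) : ℝ :=
  ∑ k ∈ Finset.range (n + 1), b n k p * g k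

variable {p : ℝ}

lemma b_nonneg (hp0 : 0 ≤ p) (hp1 : p ≤ 1) (n k : ℕ) : 0 ≤ b n k p := by
  have h1 : (0:ℝ) ≤ 1 - p := by linarith
  unfold b
  positivity

lemma b_eq_zero {n k : ℕ} (h : n < k) : b n k p = 0 := by
  simp [b, Nat.choose_eq_zero_of_lt h]

lemma b_succ (n k : ℕ) : b (n+1) (k+1) p = (1-p) * b n (k+1) p + p * b n k p := by
  rcases le_or_gt (k+1) n with h | h
  · have h1 : n - (k+1) + 1 = n - k := by omega
    have h2 : (n+1) - (k+1) = n - k := by omega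
    unfold b
    rw [Nat.choose_succ_succ' n k, h2, ← h1]
    push_cast
    ring
  · rcases Nat.lt_or_ge n k with h' | h'
    · rw [b_eq_zero (by omega), b_eq_zero (by omega), b_eq_zero (by omega)]; ring
    · have hnk : n = k := by omega
      subst hnk
      rw [b_eq_zero (k := n+1) (Nat.lt_succ_self n)]
      unfold b
      rw [Nat.choose_self, Nat.choose_self, Nat.sub_self, Nat.sub_self, pow_succ]
      push_cast
      ring

lemma b_succ_zero (n : ℕ) : b (n+1) 0 p = (1-p) * b n 0 p := by
  unfold b; simp [pow_succ]; ring

/-- master recursion for binomial expectations -/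
lemma binE_succ (n : ℕ) (g : ℕ → ℝ) :
    binE (n+1) p g = (1-p) * binE n p g + p * binE n p (fun k => g (k+1)) := by
  unfold binE
  rw [Finset.sum_range_succ' (fun k => b (n+1) k p * g k) (n+1)]
  have h1 : ∀ k, b (n+1) (k+1) p * g (k+1)
      = (1-p) * (b n (k+1) p * g (k+1)) + p * (b n k p * g (k+1)) := by
    intro k; rw [b_succ]; ring
  simp only [h1]
  rw [Finset.sum_add_distrib, ← Finset.mul_sum, ← Finset.mul_sum, b_succ_zero]
  have h2 : ∑ k ∈ Finset.range (n+1), b n (k+1) p * g (k+1)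
      = ∑ k ∈ Finset.range (n+2), b n k p * g k - b n 0 p * g 0 := by
    rw [Finset.sum_range_succ' (fun k => b n k p * g k) (n+1)]; ring
  have h3 : ∑ k ∈ Finset.range (n+2), b n k p * g k
      = ∑ k ∈ Finset.range (n+1), b n k p * g k := by
    rw [Finset.sum_range_succ]
    rw [b_eq_zero (by omega)]; ring
  rw [h2, h3]; ring

lemma binE_one (n : ℕ) : binE n p (fun _ => 1) = 1 := by
  unfold binE b
  have := add_pow p (1-p) n
  simp only [mul_one]
  have h : ∀ k ∈ Finset.range (n+1),
      (n.choose k : ℝ) * p ^ k * (1-p) ^ (n-k) = p ^ k * (1-p) ^ (n-k) * (n.choose k : ℝ) := by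
    intro k _; ring
  rw [Finset.sum_congr rfl h, ← this]
  norm_num

lemma binE_mono_integrand (hp0 : 0 ≤ p) (hp1 : p ≤ 1) (n : ℕ) {g₁ g₂ : ℕ → ℝ}
    (h : ∀ k, g₁ k ≤ g₂ k) : binE n p g₁ ≤ binE n p g₂ := by
  refine Finset.sum_le_sum fun k _ => ?_
  exact mul_le_mul_of_nonneg_left (h k) (b_nonneg hp0 hp1 n k)

lemma binE_mono_n (hp0 : 0 ≤ p) (hp1 : p ≤ 1) (n : ℕ) (g : ℕ → ℝ)
    (hg : ∀ k, g k ≤ g (k+1)) : binE n p g ≤ binE (n+1) p g := by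
  rw [binE_succ]
  have h1 : binE n p g ≤ binE n p (fun k => g (k+1)) :=
    binE_mono_integrand hp0 hp1 n hg
  nlinarith [mul_le_mul_of_nonneg_left h1 hp0]

lemma binE_mono_n' (hp0 : 0 ≤ p) (hp1 : p ≤ 1) {m n : ℕ} (hmn : m ≤ n) (g : ℕ → ℝ)
    (hg : ∀ k, g k ≤ g (k+1)) : binE m p g ≤ binE n p g := by
  induction n with
  | zero => simp_all
  | succ n ih =>
    rcases Nat.lt_or_ge m (n+1) with h | h
    · exact le_trans (ih (by omega)) (binE_mono_n hp0 hp1 n g hg)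
    · have : m = n+1 := by omega
      subst this; rfl

/-- the shifted tail quantity `E[f(X - a); X ≥ a]` -/
noncomputable def L (n : ℕ) (p : ℝ) (a : ℕ) (f : ℕ → ℝ) : ℝ :=
  binE n p (fun k => if a ≤ k then f (k - a) else 0)

/-- the tail probability `P(X ≥ a)` -/
noncomputable def T (n : ℕ) (p : ℝ) (a : ℕ) : ℝ := L n p a (fun _ => 1)

lemma L_zero (n : ℕ) (f : ℕ → ℝ) : L n p 0 f = binE n p f := by
  unfold L; congr 1

lemma L_base (a : ℕ) (f : ℕ → ℝ) : L 0 p (a+1) f = 0 := by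
  unfold L binE; simp [b]

lemma L_succ (n a : ℕ) (f : ℕ → ℝ) :
    L (n+1) p (a+1) f = (1-p) * L n p (a+1) f + p * L n p a f := by
  unfold L
  rw [binE_succ]
  have : (fun k => if a+1 ≤ k+1 then f (k+1 - (a+1)) else 0)
      = (fun k => if a ≤ k then f (k - a) else 0) := by
    funext k
    simp only [Nat.succ_le_succ_iff, Nat.succ_sub_succ]
  rw [this]

lemma T_nonneg (hp0 : 0 ≤ p) (hp1 : p ≤ 1) (n a : ℕ) : 0 ≤ T n p a := by
  unfold T L binE
  refine Finset.sum_nonneg fun k _ => ?_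
  have := b_nonneg hp0 hp1 (p := p) n k
  positivity

/-- **Key lemma**: `E[f(X-a); X ≥ a] ≤ P(X ≥ a) E[f(X)]` for monotone `f`. -/
lemma L_le (hp0 : 0 ≤ p) (hp1 : p ≤ 1) (f : ℕ → ℝ) (hf : ∀ k, f k ≤ f (k+1)) :
    ∀ n a, L n p a f ≤ T n p a * binE n p f := by
  intro n
  induction n with
  | zero =>
    intro a
    match a with
    | 0 => rw [L_zero, T, L_zero, binE_one]; simp
    | a+1 => rw [L_base, T, L_base]; simp
  | succ n ih =>
    intro a
    match a with
    | 0 => rw [L_zero, T, L_zero, binE_one]; simp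
    | a+1 =>
      rw [L_succ, T, L_succ]
      have h1 := ih (a+1)
      have h2 := ih a
      have hq : (0:ℝ) ≤ 1 - p := by linarith
      have hmono : binE n p f ≤ binE (n+1) p f := binE_mono_n hp0 hp1 n f hf
      calc (1-p) * L n p (a+1) f + p * L n p a f
          ≤ (1-p) * (T n p (a+1) * binE n p f) + p * (T n p a * binE n p f) := by
            have := mul_le_mul_of_nonneg_left h1 hq
            have := mul_le_mul_of_nonneg_left h2 hp0
            linarith
        _ = ((1-p) * L n p (a+1) (fun _ => 1) + p * L n p a (fun _ => 1)) * binE n p f := by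
            unfold T; ring
        _ ≤ ((1-p) * L n p (a+1) (fun _ => 1) + p * L n p a (fun _ => 1)) * binE (n+1) p f := by
            have h3 : 0 ≤ (1-p) * L n p (a+1) (fun _ => 1) + p * L n p a (fun _ => 1) := by
              have := T_nonneg hp0 hp1 (p := p) n (a+1)
              have := T_nonneg hp0 hp1 (p := p) n a
              unfold T at *
              nlinarith
            exact mul_le_mul_of_nonneg_left hmono h3

end NPaux

namespace NPaux

variable {Ω : Type*} [MeasurableSpace Ω]

lemma walk_zero (ξ : ℕ → Ω → ℕ) (ω : Ω) : walk ξ 0 ω = 1 := by simp [walk]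

lemma walk_succ (ξ : ℕ → Ω → ℕ) (t : ℕ) (ω : Ω) :
    walk ξ (t+1) ω = walk ξ t ω + (ξ (t+1) ω : ℤ) - 1 := by
  unfold walk
  rw [Finset.sum_Icc_succ_top (by omega : 1 ≤ t+1)]
  ring

lemma walk_measurable (ξ : ℕ → Ω → ℕ) (hmeas : ∀ i, Measurable (ξ i)) (t : ℕ) :
    Measurable (walk ξ t) := by
  unfold walk
  apply Measurable.const_add
  exact Finset.measurable_sum _ fun i _ =>
    (Measurable.of_discrete (f := fun k : ℕ => (k:ℤ) - 1)).comp (hmeas i)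

/-- the event that time `t` is a "hit" -/
def hitSet (ξ : ℕ → Ω → ℕ) (H : ℕ) (ω : Ω) : Set ℕ :=
  {t | 1 ≤ t ∧ ((H : ℤ) ≤ walk ξ t ω ∨ walk ξ t ω = 0)}

lemma hitTime_eq_sInf (ξ : ℕ → Ω → ℕ) (H : ℕ) (ω : Ω) :
    hitTime ξ H ω = sInf (hitSet ξ H ω) := rfl

lemma measurableSet_hitSet (ξ : ℕ → Ω → ℕ) (hmeas : ∀ i, Measurable (ξ i)) (H t : ℕ) :
    MeasurableSet {ω : Ω | t ∈ hitSet ξ H ω} := by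
  by_cases h1 : 1 ≤ t
  · have : {ω : Ω | t ∈ hitSet ξ H ω}
        = walk ξ t ⁻¹' (Set.Ici (H:ℤ)) ∪ walk ξ t ⁻¹' {0} := by
      ext ω; simp [hitSet, h1]
    rw [this]
    exact ((walk_measurable ξ hmeas t) measurableSet_Ici).union
      ((walk_measurable ξ hmeas t) (measurableSet_singleton 0))
  · have : {ω : Ω | t ∈ hitSet ξ H ω} = ∅ := by
      ext ω; simp [hitSet, h1]
    rw [this]; exact MeasurableSet.empty

lemma hitTime_measurable (ξ : ℕ → Ω → ℕ) (hmeas : ∀ i, Measurable (ξ i)) (H : ℕ) :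
    Measurable (hitTime ξ H) := by
  apply measurable_to_countable'
  intro m
  match m with
  | 0 =>
    have : hitTime ξ H ⁻¹' {0} = ⋂ t, {ω : Ω | t ∈ hitSet ξ H ω}ᶜ := by
      ext ω
      simp only [Set.mem_preimage, Set.mem_singleton_iff, hitTime_eq_sInf, Set.mem_iInter,
        Set.mem_compl_iff]
      constructor
      · intro h t ht
        rcases Nat.sInf_eq_zero.1 h with h0 | h0
        · exact absurd h0.1 (by omega)
        · rw [Set.eq_empty_iff_forall_notMem] at h0
          exact h0 t ht
      · intro h
        rw [Nat.sInf_eq_zero]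
        right
        exact Set.eq_empty_iff_forall_notMem.2 fun t ht => h t ht
    rw [this]
    exact MeasurableSet.iInter fun t => (measurableSet_hitSet ξ hmeas H t).compl
  | m+1 =>
    have : hitTime ξ H ⁻¹' {m+1}
        = {ω : Ω | m+1 ∈ hitSet ξ H ω} ∩ ⋂ k, ⋂ (_ : k < m+1), {ω : Ω | k ∈ hitSet ξ H ω}ᶜ := by
      ext ω
      simp only [Set.mem_preimage, Set.mem_singleton_iff, hitTime_eq_sInf, Set.mem_inter_iff,
        Set.mem_iInter, Set.mem_compl_iff, Set.mem_setOf_eq]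
      constructor
      · intro h
        have hne : (hitSet ξ H ω).Nonempty := by
          by_contra hemp
          rw [Set.not_nonempty_iff_eq_empty] at hemp
          rw [hemp] at h
          simp at h
        refine ⟨h ▸ Nat.sInf_mem hne, fun k hk => Nat.notMem_of_lt_sInf (h ▸ hk)⟩
      · rintro ⟨h1, h2⟩
        have hle : sInf (hitSet ξ H ω) ≤ m+1 := Nat.sInf_le h1
        have hne : (hitSet ξ H ω).Nonempty := ⟨m+1, h1⟩
        have hmem := Nat.sInf_mem hne
        by_contra hne'
        have hlt : sInf (hitSet ξ H ω) < m+1 := by omega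
        exact h2 _ hlt hmem
    rw [this]
    exact (measurableSet_hitSet ξ hmeas H (m+1)).inter
      (MeasurableSet.iInter fun k => MeasurableSet.iInter fun _ =>
        (measurableSet_hitSet ξ hmeas H k).compl)

lemma walk_hitTime_measurable (ξ : ℕ → Ω → ℕ) (hmeas : ∀ i, Measurable (ξ i)) (H : ℕ) :
    Measurable (fun ω => walk ξ (hitTime ξ H ω) ω) := by
  apply measurable_to_countable'
  intro z
  have : (fun ω => walk ξ (hitTime ξ H ω) ω) ⁻¹' {z}
      = ⋃ t, (hitTime ξ H ⁻¹' {t}) ∩ (walk ξ t ⁻¹' {z}) := by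
    ext ω
    simp only [Set.mem_preimage, Set.mem_singleton_iff, Set.mem_iUnion, Set.mem_inter_iff]
    constructor
    · intro h; exact ⟨hitTime ξ H ω, rfl, h⟩
    · rintro ⟨t, rfl, h⟩; exact h
  rw [this]
  exact MeasurableSet.iUnion fun t =>
    ((hitTime_measurable ξ hmeas H) (measurableSet_singleton t)).inter
      ((walk_measurable ξ hmeas t) (measurableSet_singleton z))

end NPaux

namespace NPaux

lemma binomialMeasure_singleton (n : ℕ) (p : ℝ) (x : ℕ) :
    binomialMeasure n p {x} = ENNReal.ofReal (b n x p) := by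
  unfold binomialMeasure
  rw [Measure.sum_apply _ (measurableSet_singleton x)]
  rw [tsum_eq_single x]
  · simp [b, Measure.smul_apply, Measure.dirac_apply]
  · intro k hk
    simp [Measure.smul_apply, Measure.dirac_apply, hk]

lemma binomialMeasure_tail_zero (n : ℕ) (p : ℝ) :
    binomialMeasure n p {x | n < x} = 0 := by
  unfold binomialMeasure
  rw [Measure.sum_apply _ (by
    exact Set.Countable.measurableSet (Set.to_countable _))]
  rw [ENNReal.tsum_eq_zero]
  intro k
  rcases le_or_gt k n with h | h
  · rw [Measure.smul_apply, Measure.dirac_apply]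
    have : k ∉ {x | n < x} := by simpa using h
    simp [Set.indicator_of_notMem this]
  · have hb : ((n.choose k:ℝ) * p^k * (1-p)^(n-k)) = 0 := b_eq_zero h
    rw [Measure.smul_apply, hb]
    simp

lemma binomialMeasure_eq_finsetSum (n : ℕ) (p : ℝ) :
    binomialMeasure n p
      = ∑ k ∈ Finset.range (n+1), ENNReal.ofReal (b n k p) • Measure.dirac k := by
  ext s hs
  rw [Measure.finset_sum_apply]
  unfold binomialMeasure
  rw [Measure.sum_apply _ hs]
  refine tsum_eq_sum fun k hk => ?_
  have hnk : n < k := by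
    by_contra h
    exact hk (Finset.mem_range.2 (by omega))
  have hb : ((n.choose k:ℝ) * p^k * (1-p)^(n-k)) = 0 := b_eq_zero hnk
  rw [hb]
  simp

lemma integrable_dirac' {g : ℕ → ℝ} (k : ℕ) : Integrable g (Measure.dirac k) := by
  refine (integrable_const (g k)).congr ?_
  rw [Filter.EventuallyEq, MeasureTheory.ae_dirac_eq]
  exact Filter.eventually_pure.2 rfl

lemma integral_binomialMeasure {p : ℝ} (hp0 : 0 ≤ p) (hp1 : p ≤ 1) (n : ℕ) (g : ℕ → ℝ) :
    ∫ m, g m ∂(binomialMeasure n p) = binE n p g := by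
  rw [binomialMeasure_eq_finsetSum]
  rw [integral_finset_sum_measure (fun k _ =>
    (integrable_dirac' k).smul_measure ENNReal.ofReal_ne_top)]
  unfold binE
  refine Finset.sum_congr rfl fun k _ => ?_
  rw [integral_smul_measure, integral_dirac]
  rw [ENNReal.toReal_ofReal (b_nonneg hp0 hp1 n k)]
  simp [mul_comm]

lemma binE_const (n : ℕ) {p : ℝ} (c : ℝ) : binE n p (fun _ => c) = c := by
  have h1 : binE n p (fun _ => c) = c * binE n p (fun _ => 1) := by
    unfold binE
    rw [Finset.mul_sum]
    exact Finset.sum_congr rfl fun k _ => by ring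
  rw [h1, binE_one, mul_one]

lemma binE_add (n : ℕ) {p : ℝ} (g₁ g₂ : ℕ → ℝ) :
    binE n p (fun k => g₁ k + g₂ k) = binE n p g₁ + binE n p g₂ := by
  unfold binE
  rw [← Finset.sum_add_distrib]
  exact Finset.sum_congr rfl fun k _ => by ring

end NPaux

namespace NPaux

variable {Ω : Type*} [MeasurableSpace Ω]

/-- no hit in `[1,t]`, encoded via walk staying in `(0,H)`, and walk at `t` equals `s` -/
def Bset (ξ : ℕ → Ω → ℕ) (H t s : ℕ) : Set Ω :=
  {ω | (∀ u, 1 ≤ u → u ≤ t → (0 < walk ξ u ω ∧ walk ξ u ω < (H:ℤ))) ∧ walk ξ t ω = (s:ℤ)}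

/-- piece of the target event with `γ = t+1`, `S_t = s`, `ξ_{t+1} = x` -/
def piece (ξ : ℕ → Ω → ℕ) (H : ℕ) (Ξ : Set ℕ) (t s x : ℕ) : Set Ω :=
  {ω | ω ∈ Bset ξ H t s ∧ ξ (t+1) ω = x ∧ t+1 ∈ Ξ ∧ 1 ≤ s ∧ s ≤ H ∧ H+1 ≤ s+x}

/-- the conditioning event -/
def Aset (ξ : ℕ → Ω → ℕ) (H : ℕ) (Ξ : Set ℕ) : Set Ω :=
  {ω | (H : ℤ) ≤ walk ξ (hitTime ξ H ω) ω ∧ hitTime ξ H ω ∈ Ξ}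

lemma walk_bounds {ξ : ℕ → Ω → ℕ} {H t : ℕ} {ω : Ω}
    (h : ∀ u, 1 ≤ u → u ≤ t → u ∉ hitSet ξ H ω) :
    ∀ u, 1 ≤ u → u ≤ t → 0 < walk ξ u ω ∧ walk ξ u ω < (H:ℤ) := by
  intro u
  induction u with
  | zero => omega
  | succ v ih =>
    intro _ hle
    have hnot := h (v+1) (by omega) hle
    simp only [hitSet, Set.mem_setOf_eq, not_and, not_or] at hnot
    have hnot' := hnot (by omega)
    have hprev : 0 < walk ξ v ω := by
      rcases Nat.eq_zero_or_pos v with hv | hv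
      · subst hv; rw [walk_zero]; omega
      · exact (ih hv (by omega)).1
    have hstep := walk_succ ξ v ω
    have hx : (0:ℤ) ≤ (ξ (v+1) ω : ℤ) := Int.natCast_nonneg _
    constructor
    · have : walk ξ (v+1) ω ≠ 0 := by tauto
      omega
    · omega

lemma piece_spec {ξ : ℕ → Ω → ℕ} {H : ℕ} {Ξ : Set ℕ} {t s x : ℕ} {ω : Ω}
    (hω : ω ∈ piece ξ H Ξ t s x) :
    hitTime ξ H ω = t+1 ∧ walk ξ t ω = (s:ℤ) ∧ ξ (t+1) ω = x
      ∧ walk ξ (t+1) ω = (s:ℤ) + (x:ℤ) - 1 ∧ ω ∈ Aset ξ H Ξ := by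
  obtain ⟨⟨hB1, hB2⟩, hx, hΞ', hs1, hsH, hov⟩ := hω
  have hw : walk ξ (t+1) ω = (s:ℤ) + (x:ℤ) - 1 := by
    rw [walk_succ, hB2, hx]
  have hge : (H:ℤ) ≤ walk ξ (t+1) ω := by
    rw [hw]
    have : (H:ℤ) + 1 ≤ (s:ℤ) + (x:ℤ) := by exact_mod_cast hov
    omega
  have hmem : t+1 ∈ hitSet ξ H ω := ⟨by omega, Or.inl hge⟩
  have hne : (hitSet ξ H ω).Nonempty := ⟨t+1, hmem⟩
  have hht : hitTime ξ H ω = t+1 := by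
    have hle : hitTime ξ H ω ≤ t+1 := Nat.sInf_le hmem
    rcases Nat.lt_or_ge (hitTime ξ H ω) (t+1) with hlt | hge' 
    · exfalso
      have hsInf : hitTime ξ H ω ∈ hitSet ξ H ω := Nat.sInf_mem hne
      have h1u : 1 ≤ hitTime ξ H ω := hsInf.1
      have hub := hB1 (hitTime ξ H ω) h1u (by omega)
      rcases hsInf.2 with h' | h' <;> omega
    · omega
  refine ⟨hht, hB2, hx, hw, ?_, ?_⟩
  · rw [hht]; exact hge
  · rw [hht]; exact hΞ'

lemma mem_piece_of_mem_Aset {ξ : ℕ → Ω → ℕ} {H : ℕ} {Ξ : Set ℕ}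
    (hΞ : ∀ t ∈ Ξ, 0 < t) (hH : 0 < H) {ω : Ω} (hω : ω ∈ Aset ξ H Ξ) :
    ∃ t s x, ω ∈ piece ξ H Ξ t s x := by
  obtain ⟨hge, hmemΞ⟩ := hω
  set γ := hitTime ξ H ω with hγ
  have hγpos : 0 < γ := hΞ γ hmemΞ
  obtain ⟨t, ht⟩ : ∃ t, γ = t + 1 := ⟨γ - 1, by omega⟩
  have hnotbefore : ∀ u, 1 ≤ u → u ≤ t → u ∉ hitSet ξ H ω := by
    intro u _ hu
    apply Nat.notMem_of_lt_sInf
    rw [← hitTime_eq_sInf]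
    omega
  have hbounds := walk_bounds hnotbefore
  have hwt : 0 < walk ξ t ω ∧ walk ξ t ω ≤ (H:ℤ) := by
    rcases Nat.eq_zero_or_pos t with h0 | h0
    · subst h0; rw [walk_zero]; constructor
      · omega
      · exact_mod_cast hH
    · have := hbounds t h0 le_rfl; omega
  set s := (walk ξ t ω).toNat with hs
  have hws : walk ξ t ω = (s:ℤ) := by
    rw [hs, Int.toNat_of_nonneg (by omega)]
  refine ⟨t, s, ξ (t+1) ω, ⟨⟨hbounds, hws⟩, rfl, by rw [← ht]; exact hmemΞ, ?_, ?_, ?_⟩⟩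
  · omega
  · have : (s:ℤ) ≤ (H:ℤ) := by rw [← hws]; exact hwt.2
    exact_mod_cast this
  · rw [ht] at hge
    rw [walk_succ, hws] at hge
    have : (H:ℤ) + 1 ≤ (s:ℤ) + (ξ (t+1) ω : ℤ) := by omega
    exact_mod_cast this

lemma piece_pairwise_disjoint (ξ : ℕ → Ω → ℕ) (H : ℕ) (Ξ : Set ℕ) :
    Pairwise (Function.onFun Disjoint fun σ : (ℕ × ℕ) × ℕ => piece ξ H Ξ σ.1.1 σ.1.2 σ.2) := by
  rintro ⟨⟨t, s⟩, x⟩ ⟨⟨t', s'⟩, x'⟩ hne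
  simp only [Function.onFun]
  rw [Set.disjoint_left]
  intro ω h1 h2
  obtain ⟨ht1, hs1, hx1, -, -⟩ := piece_spec (t := t) (s := s) (x := x) h1
  obtain ⟨ht2, hs2, hx2, -, -⟩ := piece_spec (t := t') (s := s') (x := x') h2
  have htt : t = t' := by omega
  subst htt
  have hss : s = s' := by
    have : (s:ℤ) = (s':ℤ) := by rw [← hs1, ← hs2]
    exact_mod_cast this
  have hxx : x = x' := by omega
  exact hne (by simp [hss, hxx])

lemma Aset_eq_iUnion {ξ : ℕ → Ω → ℕ} {H : ℕ} {Ξ : Set ℕ}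
    (hΞ : ∀ t ∈ Ξ, 0 < t) (hH : 0 < H) :
    Aset ξ H Ξ = ⋃ σ : (ℕ × ℕ) × ℕ, piece ξ H Ξ σ.1.1 σ.1.2 σ.2 := by
  ext ω
  simp only [Set.mem_iUnion]
  constructor
  · intro h
    obtain ⟨t, s, x, h⟩ := mem_piece_of_mem_Aset hΞ hH h
    exact ⟨⟨⟨t, s⟩, x⟩, h⟩
  · rintro ⟨⟨⟨t, s⟩, x⟩, h⟩
    exact (piece_spec h).2.2.2.2

lemma Bset_measurable (ξ : ℕ → Ω → ℕ) (hmeas : ∀ i, Measurable (ξ i)) (H t s : ℕ) :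
    MeasurableSet (Bset ξ H t s) := by
  have : Bset ξ H t s
      = (⋂ u, ⋂ (_ : 1 ≤ u), ⋂ (_ : u ≤ t), walk ξ u ⁻¹' Set.Ioo 0 (H:ℤ))
        ∩ walk ξ t ⁻¹' {(s:ℤ)} := by
    ext ω
    simp only [Bset, Set.mem_setOf_eq, Set.mem_inter_iff, Set.mem_iInter,
      Set.mem_preimage, Set.mem_Ioo, Set.mem_singleton_iff]
  rw [this]
  exact (MeasurableSet.iInter fun u => MeasurableSet.iInter fun _ =>
    MeasurableSet.iInter fun _ => (walk_measurable ξ hmeas u) measurableSet_Ioo).inter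
    ((walk_measurable ξ hmeas t) (measurableSet_singleton _))

lemma piece_eq_pos {ξ : ℕ → Ω → ℕ} {H : ℕ} {Ξ : Set ℕ} {t s x : ℕ}
    (h : t+1 ∈ Ξ ∧ 1 ≤ s ∧ s ≤ H ∧ H+1 ≤ s+x) :
    piece ξ H Ξ t s x = Bset ξ H t s ∩ ξ (t+1) ⁻¹' {x} := by
  ext ω
  simp only [piece, Set.mem_setOf_eq, Set.mem_inter_iff, Set.mem_preimage,
    Set.mem_singleton_iff]
  tauto

lemma piece_eq_empty {ξ : ℕ → Ω → ℕ} {H : ℕ} {Ξ : Set ℕ} {t s x : ℕ}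
    (h : ¬(t+1 ∈ Ξ ∧ 1 ≤ s ∧ s ≤ H ∧ H+1 ≤ s+x)) :
    piece ξ H Ξ t s x = ∅ := by
  ext ω
  simp only [piece, Set.mem_setOf_eq, Set.mem_empty_iff_false, iff_false]
  tauto

lemma piece_measurable (ξ : ℕ → Ω → ℕ) (hmeas : ∀ i, Measurable (ξ i)) (H : ℕ) (Ξ : Set ℕ)
    (t s x : ℕ) : MeasurableSet (piece ξ H Ξ t s x) := by
  by_cases h : t+1 ∈ Ξ ∧ 1 ≤ s ∧ s ≤ H ∧ H+1 ≤ s+x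
  · rw [piece_eq_pos h]
    exact (Bset_measurable ξ hmeas H t s).inter ((hmeas (t+1)) (measurableSet_singleton x))
  · rw [piece_eq_empty h]
    exact MeasurableSet.empty

lemma Aset_measurable (ξ : ℕ → Ω → ℕ) (hmeas : ∀ i, Measurable (ξ i)) (H : ℕ) (Ξ : Set ℕ) :
    MeasurableSet (Aset ξ H Ξ) := by
  have : Aset ξ H Ξ = (fun ω => walk ξ (hitTime ξ H ω) ω) ⁻¹' Set.Ici (H:ℤ)
      ∩ hitTime ξ H ⁻¹' Ξ := by
    ext ω; simp [Aset]
  rw [this]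
  exact ((walk_hitTime_measurable ξ hmeas H) measurableSet_Ici).inter
    ((hitTime_measurable ξ hmeas H) ((Set.to_countable Ξ).measurableSet))

end NPaux

namespace NPaux

variable {Ω : Type*} [MeasurableSpace Ω]

lemma measure_Bset_inter (μ : Measure Ω) [IsProbabilityMeasure μ] (n : ℕ) (p : ℝ)
    (ξ : ℕ → Ω → ℕ) (hmeas : ∀ i, Measurable (ξ i))
    (hdist : ∀ i, μ.map (ξ i) = binomialMeasure n p)
    (hindep : iIndepFun ξ μ)
    (H t s x : ℕ) :
    μ (Bset ξ H t s ∩ ξ (t+1) ⁻¹' {x})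
      = μ (Bset ξ H t s) * ENNReal.ofReal (b n x p) := by
  classical
  set S : Finset ℕ := Finset.Icc 1 t with hS
  set T : Finset ℕ := {t+1} with hT
  have hST : Disjoint S T := by
    rw [Finset.disjoint_singleton_right, hS]
    simp
  have hIF := hindep.indepFun_finset S T hST hmeas
  set X : Ω → (S → ℕ) := fun a (i : S) => ξ i a with hX
  set Y : Ω → (T → ℕ) := fun a (i : T) => ξ i a with hY
  set wk : (S → ℕ) → ℕ → ℤ := fun v u =>
    1 + ∑ i ∈ Finset.Icc 1 u, ((if h : i ∈ S then (v ⟨i, h⟩ : ℤ) else 0) - 1) with hwkdef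
  have hwk : ∀ (ω : Ω) (u : ℕ), u ≤ t → wk (X ω) u = walk ξ u ω := by
    intro ω u hu
    unfold walk
    rw [hwkdef]
    simp only
    congr 1
    refine Finset.sum_congr rfl fun i hi => ?_
    have hiS : i ∈ S := by
      rw [hS]
      rw [Finset.mem_Icc] at hi ⊢
      omega
    rw [dif_pos hiS]
  set Es : Set (S → ℕ) :=
    {v | (∀ u, 1 ≤ u → u ≤ t → (0 < wk v u ∧ wk v u < (H:ℤ))) ∧ wk v t = (s:ℤ)} with hEs
  have hB : Bset ξ H t s = X ⁻¹' Es := by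
    ext ω
    simp only [Bset, Set.mem_setOf_eq, Set.mem_preimage, hEs]
    constructor
    · rintro ⟨h1, h2⟩
      constructor
      · intro u hu1 hu2
        rw [hwk ω u hu2]
        exact h1 u hu1 hu2
      · rw [hwk ω t le_rfl]; exact h2
    · rintro ⟨h1, h2⟩
      constructor
      · intro u hu1 hu2
        rw [← hwk ω u hu2]
        exact h1 u hu1 hu2
      · rw [← hwk ω t le_rfl]; exact h2
  have htT : t+1 ∈ T := by rw [hT]; exact Finset.mem_singleton_self _
  set Ex : Set (T → ℕ) := {v | v ⟨t+1, htT⟩ = x} with hEx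
  have hxpre : ξ (t+1) ⁻¹' {x} = Y ⁻¹' Ex := by
    ext ω
    simp [hEx, hY]
  have hEsm : MeasurableSet Es := (Set.to_countable Es).measurableSet
  have hExm : MeasurableSet Ex := (Set.to_countable Ex).measurableSet
  rw [hB, hxpre, hIF.measure_inter_preimage_eq_mul Es Ex hEsm hExm]
  congr 1
  rw [← hxpre, ← Measure.map_apply (hmeas (t+1)) (measurableSet_singleton x),
    hdist (t+1), binomialMeasure_singleton]

end NPaux

namespace NPaux

variable {Ω : Type*} [MeasurableSpace Ω]

lemma piece_tsum_le (μ : Measure Ω) [IsProbabilityMeasure μ] (n : ℕ) {p : ℝ}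
    (hp0 : 0 ≤ p) (hp1 : p ≤ 1)
    (ξ : ℕ → Ω → ℕ) (hmeas : ∀ i, Measurable (ξ i))
    (hdist : ∀ i, μ.map (ξ i) = binomialMeasure n p)
    (hindep : iIndepFun ξ μ)
    (H : ℕ) (Ξ : Set ℕ) (f : ℝ → ℝ) (hf : Monotone f) (hf0 : ∀ y, 0 ≤ f y) (t s : ℕ) :
    ∑' x : ℕ, ∫⁻ ω in piece ξ H Ξ t s x,
        ENNReal.ofReal (f ((walk ξ (hitTime ξ H ω) ω - H : ℤ) : ℝ)) ∂μ
      ≤ (∑' x : ℕ, μ (piece ξ H Ξ t s x))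
          * ENNReal.ofReal (binE n p (fun k => f k)) := by
  by_cases hbase : t+1 ∈ Ξ ∧ 1 ≤ s ∧ s ≤ H
  · obtain ⟨hΞ', hs1, hsH⟩ := hbase
    set a : ℕ := H + 1 - s with ha
    set B := Bset ξ H t s with hB
    set fN : ℕ → ℝ := fun k => f k with hfN
    have hfNmono : ∀ k, fN k ≤ fN (k+1) := by
      intro k
      apply hf
      exact_mod_cast Nat.le_succ k
    -- value of the lintegral on each piece
    have hterm : ∀ x : ℕ, ∫⁻ ω in piece ξ H Ξ t s x,
        ENNReal.ofReal (f ((walk ξ (hitTime ξ H ω) ω - H : ℤ) : ℝ)) ∂μ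
        = μ B * ENNReal.ofReal (if a ≤ x then b n x p * fN (x - a) else 0) := by
      intro x
      by_cases hax : a ≤ x
      · have hcond : t+1 ∈ Ξ ∧ 1 ≤ s ∧ s ≤ H ∧ H+1 ≤ s+x := ⟨hΞ', hs1, hsH, by omega⟩
        have hval : ∀ ω ∈ piece ξ H Ξ t s x,
            ENNReal.ofReal (f ((walk ξ (hitTime ξ H ω) ω - H : ℤ) : ℝ))
              = ENNReal.ofReal (fN (x - a)) := by
          intro ω hω
          obtain ⟨hht, -, -, hw, -⟩ := piece_spec hω
          rw [hht, hw]
          congr 2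
          have : ((s:ℤ) + (x:ℤ) - 1 - (H:ℤ)) = ((x - a : ℕ) : ℤ) := by
            push_cast
            omega
          rw [this]
          simp
        rw [setLIntegral_congr_fun (piece_measurable ξ hmeas H Ξ t s x)
          hval, setLIntegral_const]
        rw [if_pos hax]
        rw [piece_eq_pos hcond, measure_Bset_inter μ n p ξ hmeas hdist hindep H t s x]
        rw [ENNReal.ofReal_mul (b_nonneg hp0 hp1 n x)]
        ring
      · have hcond : ¬(t+1 ∈ Ξ ∧ 1 ≤ s ∧ s ≤ H ∧ H+1 ≤ s+x) := by
          rintro ⟨-, -, -, h⟩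
          omega
        rw [piece_eq_empty hcond, if_neg hax]
        simp
    have hmeasp : ∀ x : ℕ, μ (piece ξ H Ξ t s x)
        = μ B * ENNReal.ofReal (if a ≤ x then b n x p else 0) := by
      intro x
      by_cases hax : a ≤ x
      · have hcond : t+1 ∈ Ξ ∧ 1 ≤ s ∧ s ≤ H ∧ H+1 ≤ s+x := ⟨hΞ', hs1, hsH, by omega⟩
        rw [piece_eq_pos hcond, measure_Bset_inter μ n p ξ hmeas hdist hindep H t s x,
          if_pos hax]
      · have hcond : ¬(t+1 ∈ Ξ ∧ 1 ≤ s ∧ s ≤ H ∧ H+1 ≤ s+x) := by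
          rintro ⟨-, -, -, h⟩
          omega
        rw [piece_eq_empty hcond, if_neg hax]
        simp
    -- compute the two tsums
    have hL : ∑' x : ℕ, ENNReal.ofReal (if a ≤ x then b n x p * fN (x - a) else 0)
        = ENNReal.ofReal (L n p a fN) := by
      rw [tsum_eq_sum (s := Finset.range (n+1)) ?_]
      · rw [← ENNReal.ofReal_sum_of_nonneg ?_]
        · congr 1
          unfold L binE
          refine Finset.sum_congr rfl fun k _ => ?_
          by_cases hak : a ≤ k
          · simp [hak]
          · simp [hak]
        · intro k _
          by_cases hak : a ≤ k
          · rw [if_pos hak]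
            exact mul_nonneg (b_nonneg hp0 hp1 n k) (hf0 _)
          · rw [if_neg hak]
      · intro x hx
        have hnx : n < x := by
          by_contra h
          exact hx (Finset.mem_range.2 (by omega))
        by_cases hax : a ≤ x
        · rw [if_pos hax, b_eq_zero hnx, zero_mul, ENNReal.ofReal_zero]
        · rw [if_neg hax, ENNReal.ofReal_zero]
    have hT : ∑' x : ℕ, ENNReal.ofReal (if a ≤ x then b n x p else 0)
        = ENNReal.ofReal (T n p a) := by
      rw [tsum_eq_sum (s := Finset.range (n+1)) ?_]
      · rw [← ENNReal.ofReal_sum_of_nonneg ?_]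
        · congr 1
          unfold T L binE
          refine Finset.sum_congr rfl fun k _ => ?_
          by_cases hak : a ≤ k
          · simp [hak]
          · simp [hak]
        · intro k _
          by_cases hak : a ≤ k
          · rw [if_pos hak]
            exact b_nonneg hp0 hp1 n k
          · rw [if_neg hak]
      · intro x hx
        have hnx : n < x := by
          by_contra h
          exact hx (Finset.mem_range.2 (by omega))
        by_cases hax : a ≤ x
        · rw [if_pos hax, b_eq_zero hnx, ENNReal.ofReal_zero]
        · rw [if_neg hax, ENNReal.ofReal_zero]
    calc ∑' x : ℕ, ∫⁻ ω in piece ξ H Ξ t s x,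
            ENNReal.ofReal (f ((walk ξ (hitTime ξ H ω) ω - H : ℤ) : ℝ)) ∂μ
        = μ B * ENNReal.ofReal (L n p a fN) := by
          rw [tsum_congr hterm, ENNReal.tsum_mul_left, hL]
      _ ≤ μ B * (ENNReal.ofReal (T n p a) * ENNReal.ofReal (binE n p fN)) := by
          apply mul_le_mul_right
          rw [← ENNReal.ofReal_mul (T_nonneg hp0 hp1 n a)]
          exact ENNReal.ofReal_le_ofReal (L_le hp0 hp1 fN hfNmono n a)
      _ = (∑' x : ℕ, μ (piece ξ H Ξ t s x)) * ENNReal.ofReal (binE n p fN) := by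
          rw [tsum_congr hmeasp, ENNReal.tsum_mul_left, hT, mul_assoc]
  · have hempty : ∀ x : ℕ, piece ξ H Ξ t s x = ∅ := by
      intro x
      apply piece_eq_empty
      tauto
    simp only [hempty]
    simp

lemma piece_disjoint_x {ξ : ℕ → Ω → ℕ} {H : ℕ} {Ξ : Set ℕ} (t s : ℕ) :
    Pairwise (Function.onFun Disjoint fun x : ℕ => piece ξ H Ξ t s x) := by
  intro x x' hne
  exact piece_pairwise_disjoint ξ H Ξ (i := ((t, s), x)) (j := ((t, s), x')) (by simp [hne])

lemma Cset_disjoint {ξ : ℕ → Ω → ℕ} {H : ℕ} {Ξ : Set ℕ} :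
    Pairwise (Function.onFun Disjoint fun ts : ℕ × ℕ => ⋃ x : ℕ, piece ξ H Ξ ts.1 ts.2 x) := by
  rintro ⟨t, s⟩ ⟨t', s'⟩ hne
  simp only [Function.onFun]
  rw [Set.disjoint_left]
  intro ω h1 h2
  rw [Set.mem_iUnion] at h1 h2
  obtain ⟨x, h1⟩ := h1
  obtain ⟨x', h2⟩ := h2
  have hd := piece_pairwise_disjoint ξ H Ξ (i := ((t, s), x)) (j := ((t', s'), x'))
  by_cases hx : ((t, s), x) = ((t', s'), x')
  · have : (t, s) = (t', s') := by
      have := congrArg Prod.fst hx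
      simpa using this
    exact hne this
  · exact Set.disjoint_left.1 (hd hx) h1 h2

lemma Aset_eq_iUnion2 {ξ : ℕ → Ω → ℕ} {H : ℕ} {Ξ : Set ℕ}
    (hΞ : ∀ t ∈ Ξ, 0 < t) (hH : 0 < H) :
    Aset ξ H Ξ = ⋃ ts : ℕ × ℕ, ⋃ x : ℕ, piece ξ H Ξ ts.1 ts.2 x := by
  ext ω
  simp only [Set.mem_iUnion]
  constructor
  · intro h
    obtain ⟨t, s, x, h⟩ := mem_piece_of_mem_Aset hΞ hH h
    exact ⟨⟨t, s⟩, x, h⟩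
  · rintro ⟨⟨t, s⟩, x, h⟩
    exact (piece_spec h).2.2.2.2

lemma lintegral_Aset_le (μ : Measure Ω) [IsProbabilityMeasure μ] (n : ℕ) {p : ℝ}
    (hp0 : 0 ≤ p) (hp1 : p ≤ 1)
    (ξ : ℕ → Ω → ℕ) (hmeas : ∀ i, Measurable (ξ i))
    (hdist : ∀ i, μ.map (ξ i) = binomialMeasure n p)
    (hindep : iIndepFun ξ μ)
    (H : ℕ) (hH : 0 < H) (Ξ : Set ℕ) (hΞ : ∀ t ∈ Ξ, 0 < t)
    (f : ℝ → ℝ) (hf : Monotone f) (hf0 : ∀ y, 0 ≤ f y) :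
    ∫⁻ ω in Aset ξ H Ξ, ENNReal.ofReal (f ((walk ξ (hitTime ξ H ω) ω - H : ℤ) : ℝ)) ∂μ
      ≤ μ (Aset ξ H Ξ) * ENNReal.ofReal (binE n p (fun k => f k)) := by
  rw [Aset_eq_iUnion2 hΞ hH]
  rw [lintegral_iUnion (fun ts : ℕ × ℕ => MeasurableSet.iUnion fun x =>
      piece_measurable ξ hmeas H Ξ ts.1 ts.2 x) (Cset_disjoint (ξ := ξ) (H := H) (Ξ := Ξ))]
  rw [measure_iUnion Cset_disjoint (fun ts => MeasurableSet.iUnion fun x =>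
      piece_measurable ξ hmeas H Ξ ts.1 ts.2 x)]
  rw [← ENNReal.tsum_mul_right]
  refine Summable.tsum_le_tsum (fun ts => ?_) ENNReal.summable ENNReal.summable
  rw [lintegral_iUnion (fun x => piece_measurable ξ hmeas H Ξ ts.1 ts.2 x)
      (piece_disjoint_x ts.1 ts.2)]
  rw [measure_iUnion (piece_disjoint_x ts.1 ts.2)
      (fun x => piece_measurable ξ hmeas H Ξ ts.1 ts.2 x)]
  exact piece_tsum_le μ n hp0 hp1 ξ hmeas hdist hindep H Ξ f hf hf0 ts.1 ts.2

end NPaux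

/-- **Corollary 6, Nachmias–Peres.** For `f` increasing,
`E[f(S_γ - H) | S_γ ≥ H, γ ∈ Ξ] ≤ E[f(X)]` where `X ~ Bin(n,p)`. -/
theorem overshoot_expectation_le {Ω : Type*} [MeasurableSpace Ω] (μ : Measure Ω)
    [IsProbabilityMeasure μ] (n : ℕ) (hn : 0 < n) (p : ℝ) (hp0 : 0 < p) (hp1 : p < 1)
    (ξ : ℕ → Ω → ℕ) (hmeas : ∀ i, Measurable (ξ i))
    (hdist : ∀ i, μ.map (ξ i) = binomialMeasure n p)
    (hindep : iIndepFun ξ μ)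
    (H : ℕ) (hH : 0 < H) (Ξ : Set ℕ) (hΞ : ∀ t ∈ Ξ, 0 < t)
    (hpos : 0 < μ {ω | (H : ℤ) ≤ walk ξ (hitTime ξ H ω) ω ∧ hitTime ξ H ω ∈ Ξ})
    (f : ℝ → ℝ) (hf : Monotone f) :
    ∫ ω, f ((walk ξ (hitTime ξ H ω) ω - H : ℤ) : ℝ)
        ∂(μ[|{ω | (H : ℤ) ≤ walk ξ (hitTime ξ H ω) ω ∧ hitTime ξ H ω ∈ Ξ}]) ≤
      ∫ m, f (m : ℝ) ∂(binomialMeasure n p) := by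
  classical
  have hp0' : (0:ℝ) ≤ p := le_of_lt hp0
  have hp1' : p ≤ 1 := le_of_lt hp1
  have hAdef : {ω | (H : ℤ) ≤ walk ξ (hitTime ξ H ω) ω ∧ hitTime ξ H ω ∈ Ξ}
      = NPaux.Aset ξ H Ξ := rfl
  rw [hAdef] at hpos ⊢
  set A := NPaux.Aset ξ H Ξ with hA
  have hAm : MeasurableSet A := NPaux.Aset_measurable ξ hmeas H Ξ
  have hApos : μ A ≠ 0 := hpos.ne'
  have hAtop : μ A ≠ ⊤ := measure_ne_top μ A
  haveI hprob : IsProbabilityMeasure (μ[|A]) := cond_isProbabilityMeasure hApos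
  -- the shifted nonnegative monotone function
  set G : ℝ → ℝ := fun y => max (f y) (f 0) - f 0 with hG
  have hGmono : Monotone G := fun u v huv =>
    sub_le_sub_right (max_le_max (hf huv) le_rfl) _
  have hG0 : ∀ y, 0 ≤ G y := fun y => sub_nonneg.2 (le_max_right _ _)
  have hGval : ∀ y : ℝ, 0 ≤ y → G y + f 0 = f y := by
    intro y hy
    have : f 0 ≤ f y := hf hy
    simp [hG, max_eq_left this]
  -- measurability of the integrand
  have hwm := NPaux.walk_hitTime_measurable ξ hmeas H
  have hgm : Measurable (fun ω => G ((walk ξ (hitTime ξ H ω) ω - H : ℤ) : ℝ)) :=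
    (Measurable.of_discrete (f := fun z : ℤ => G ((z - (H:ℤ) : ℤ) : ℝ))).comp hwm
  -- a.e. membership in A under the conditional measure
  have haeA : ∀ᵐ ω ∂(μ[|A]), ω ∈ A := by
    rw [ae_iff]
    have : {ω | ¬ ω ∈ A} = Aᶜ := rfl
    rw [this, cond_apply hAm μ Aᶜ]
    simp
  -- a.e. all ξ i are at most n
  have haeξμ : ∀ᵐ ω ∂μ, ∀ i, ξ i ω ≤ n := by
    rw [ae_all_iff]
    intro i
    rw [ae_iff]
    have h1 : {ω | ¬ ξ i ω ≤ n} = ξ i ⁻¹' {x | n < x} := by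
      ext ω; simp
    rw [h1, ← Measure.map_apply (hmeas i) ((Set.to_countable _).measurableSet),
      hdist i, NPaux.binomialMeasure_tail_zero]
  have haeξ : ∀ᵐ ω ∂(μ[|A]), ∀ i, ξ i ω ≤ n :=
    (cond_absolutelyContinuous (s := A)).ae_le haeξμ
  -- pointwise: on A, the overshoot is in [0, n]
  have hover : ∀ ω ∈ A, (∀ i, ξ i ω ≤ n) →
      (0:ℝ) ≤ ((walk ξ (hitTime ξ H ω) ω - H : ℤ) : ℝ)
        ∧ ((walk ξ (hitTime ξ H ω) ω - H : ℤ) : ℝ) ≤ (n:ℝ) := by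
    intro ω hω hξn
    obtain ⟨t, s, x, hp⟩ := NPaux.mem_piece_of_mem_Aset hΞ hH hω
    obtain ⟨hht, -, hxv, hw, -⟩ := NPaux.piece_spec hp
    obtain ⟨-, hx', -, hs1, hsH, hov⟩ := hp
    have hxn : x ≤ n := by rw [← hxv]; exact hξn (t+1)
    rw [hht, hw]
    constructor
    · have h2 : ((H:ℤ)+1) ≤ (s:ℤ) + (x:ℤ) := by exact_mod_cast hov
      have : (0:ℤ) ≤ (s:ℤ) + (x:ℤ) - 1 - (H:ℤ) := by omega
      exact_mod_cast this
    · have h3 : (s:ℤ) ≤ (H:ℤ) := by exact_mod_cast hsH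
      have h4 : (x:ℤ) ≤ (n:ℤ) := by exact_mod_cast hxn
      have : (s:ℤ) + (x:ℤ) - 1 - (H:ℤ) ≤ (n:ℤ) := by omega
      exact_mod_cast this
  -- rewrite the integrand on A
  have hstep1 : ∫ ω, f ((walk ξ (hitTime ξ H ω) ω - H : ℤ) : ℝ) ∂(μ[|A])
      = ∫ ω, (G ((walk ξ (hitTime ξ H ω) ω - H : ℤ) : ℝ) + f 0) ∂(μ[|A]) := by
    apply integral_congr_ae
    filter_upwards [haeA, haeξ] with ω hω hξn
    rw [hGval _ ((hover ω hω hξn).1)]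
  -- integrability of G ∘ overshoot
  have hint : Integrable (fun ω => G ((walk ξ (hitTime ξ H ω) ω - H : ℤ) : ℝ)) (μ[|A]) := by
    refine (integrable_const (G n)).mono' hgm.aestronglyMeasurable ?_
    filter_upwards [haeA, haeξ] with ω hω hξn
    rw [Real.norm_of_nonneg (hG0 _)]
    exact hGmono (hover ω hω hξn).2
  -- the main estimate for G
  have hmain : ∫ ω, G ((walk ξ (hitTime ξ H ω) ω - H : ℤ) : ℝ) ∂(μ[|A])
      ≤ NPaux.binE n p (fun k => G k) := by
    have hbinEG : 0 ≤ NPaux.binE n p (fun k => G k) := by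
      have h0 : NPaux.binE n p (fun _ => (0:ℝ)) = 0 := NPaux.binE_const n 0
      calc (0:ℝ) = NPaux.binE n p (fun _ => (0:ℝ)) := h0.symm
        _ ≤ NPaux.binE n p (fun k => G k) :=
          NPaux.binE_mono_integrand hp0' hp1' n fun k => hG0 _
    have hlint := NPaux.lintegral_Aset_le μ n hp0' hp1' ξ hmeas hdist hindep H hH Ξ hΞ
      G hGmono hG0
    have hcondeq : (μ[|A]) = (μ A)⁻¹ • μ.restrict A := rfl
    rw [hcondeq, integral_smul_measure]
    rw [integral_eq_lintegral_of_nonneg_ae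
      (Filter.Eventually.of_forall fun ω => hG0 _)
      hgm.aestronglyMeasurable]
    have hne : μ A * ENNReal.ofReal (NPaux.binE n p (fun k => G k)) ≠ ⊤ :=
      ENNReal.mul_ne_top hAtop ENNReal.ofReal_ne_top
    have h1 : (∫⁻ ω, ENNReal.ofReal (G ((walk ξ (hitTime ξ H ω) ω - H : ℤ) : ℝ))
          ∂(μ.restrict A)).toReal
        ≤ (μ A * ENNReal.ofReal (NPaux.binE n p (fun k => G k))).toReal :=
      ENNReal.toReal_mono hne hlint
    have h2 : (μ A * ENNReal.ofReal (NPaux.binE n p (fun k => G k))).toReal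
        = (μ A).toReal * NPaux.binE n p (fun k => G k) := by
      rw [ENNReal.toReal_mul, ENNReal.toReal_ofReal hbinEG]
    have hm0 : (μ A).toReal ≠ 0 := ENNReal.toReal_ne_zero.2 ⟨hApos, hAtop⟩
    have hminv : ((μ A)⁻¹).toReal = ((μ A).toReal)⁻¹ := ENNReal.toReal_inv _
    rw [smul_eq_mul, hminv]
    calc ((μ A).toReal)⁻¹ * (∫⁻ ω, ENNReal.ofReal
            (G ((walk ξ (hitTime ξ H ω) ω - H : ℤ) : ℝ)) ∂(μ.restrict A)).toReal
        ≤ ((μ A).toReal)⁻¹ * ((μ A).toReal * NPaux.binE n p (fun k => G k)) := by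
          rw [← h2]
          exact mul_le_mul_of_nonneg_left h1 (by positivity)
      _ = NPaux.binE n p (fun k => G k) := by
          field_simp
  -- assemble
  have hRHS : ∫ m, f (m : ℝ) ∂(binomialMeasure n p)
      = NPaux.binE n p (fun k => G k) + f 0 := by
    rw [NPaux.integral_binomialMeasure hp0' hp1' n (fun k => f k)]
    have : (fun k : ℕ => f k) = fun k : ℕ => G k + f 0 := by
      funext k
      rw [hGval _ (by positivity)]
    rw [this, NPaux.binE_add, NPaux.binE_const]
  rw [hstep1, hRHS]
  rw [integral_add hint (integrable_const (f 0))]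
  have : ∫ (_ : Ω), f 0 ∂(μ[|A]) = f 0 := by
    rw [integral_const]
    simp
  rw [this]
  exact add_le_add_left hmain _
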